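/- For x, y ∈ ℝⁿ and p ≥ 1, the separable function φ(x) = (1/(p+1))∑ᵢ |xᵢ|^{p+1} satisfies φ(x) ≥ φ(y) + ⟨∇φ(y), x − y⟩ + (1/2^{p−1})·φ(x − y). -/

import Mathlib

open scoped BigOperators

private lemma aux_phi {p : ℝ} (hp : 1 ≤ p) {u : ℝ} (hu : 0 ≤ u) :
    |u| ^ (p - 1) * u = u ^ p := by
  rcases eq_or_lt_of_le hu with h | h
  · subst h
    simp [Real.zero_rpow (by linarith : p ≠ 0)]
  · rw [abs_of_nonneg hu, ← Real.rpow_add_one (ne_of_gt h)]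
    ring_nf

private lemma aux_phi_neg {p : ℝ} (hp : 1 ≤ p) {u : ℝ} (hu : u ≤ 0) :
    |u| ^ (p - 1) * u = -((-u) ^ p) := by
  have h := aux_phi hp (u := -u) (by linarith)
  rw [abs_neg] at h
  linear_combination -h

private lemma real_rpow_superadd {p : ℝ} (hp : 1 ≤ p) {a b : ℝ} (ha : 0 ≤ a) (hb : 0 ≤ b) :
    a ^ p + b ^ p ≤ (a + b) ^ p := by
  have h := NNReal.add_rpow_le_rpow_add a.toNNReal b.toNNReal hp
  have h2 := NNReal.coe_le_coe.2 h
  push_cast [NNReal.coe_rpow, Real.coe_toNNReal _ ha, Real.coe_toNNReal _ hb,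
    Real.coe_toNNReal _ (add_nonneg ha hb)] at h2
  exact h2

private lemma real_rpow_two_mul {p : ℝ} (hp : 1 ≤ p) {a b : ℝ} (ha : 0 ≤ a) (hb : 0 ≤ b) :
    2 ^ (1 - p) * (a + b) ^ p ≤ a ^ p + b ^ p := by
  have h := NNReal.rpow_add_le_mul_rpow_add_rpow a.toNNReal b.toNNReal hp
  have h2 := NNReal.coe_le_coe.2 h
  push_cast [NNReal.coe_rpow, Real.coe_toNNReal _ ha, Real.coe_toNNReal _ hb] at h2
  have h2pos : (0:ℝ) < (2:ℝ) ^ (p - 1) := Real.rpow_pos_of_pos two_pos _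
  have key : (2:ℝ) ^ (1 - p) * (2:ℝ) ^ (p - 1) = 1 := by
    rw [← Real.rpow_add two_pos]; norm_num
  calc (2:ℝ) ^ (1 - p) * (a + b) ^ p
      ≤ 2 ^ (1 - p) * (2 ^ (p - 1) * (a ^ p + b ^ p)) := by
        apply mul_le_mul_of_nonneg_left h2 (le_of_lt (Real.rpow_pos_of_pos two_pos _))
    _ = a ^ p + b ^ p := by rw [← mul_assoc, key, one_mul]

private lemma mono_phi {p : ℝ} (hp : 1 ≤ p) {u v : ℝ} (h : v ≤ u) :
    2 ^ (1 - p) * (u - v) ^ p ≤ |u| ^ (p - 1) * u - |v| ^ (p - 1) * v := by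
  have h2le1 : (2:ℝ) ^ (1 - p) ≤ 1 :=
    Real.rpow_le_one_of_one_le_of_nonpos one_le_two (by linarith)
  have hduv : (0:ℝ) ≤ u - v := by linarith
  rcases le_or_gt 0 v with hv | hv
  · -- 0 ≤ v ≤ u
    have hu : 0 ≤ u := le_trans hv h
    rw [aux_phi hp hu, aux_phi hp hv]
    have := real_rpow_superadd hp hduv hv
    rw [sub_add_cancel] at this
    have h1 : (u - v) ^ p ≤ u ^ p - v ^ p := by linarith
    calc 2 ^ (1 - p) * (u - v) ^ p ≤ 1 * (u - v) ^ p :=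
          mul_le_mul_of_nonneg_right h2le1 (Real.rpow_nonneg hduv _)
      _ ≤ u ^ p - v ^ p := by linarith
  · rcases le_or_gt u 0 with hu | hu
    · -- v < u ≤ 0
      rw [aux_phi_neg hp hu, aux_phi_neg hp (le_of_lt hv)]
      have := real_rpow_superadd hp hduv (by linarith : (0:ℝ) ≤ -u)
      have he : u - v + -u = -v := by ring
      rw [he] at this
      have h1 : (u - v) ^ p ≤ (-v) ^ p - (-u) ^ p := by linarith
      calc 2 ^ (1 - p) * (u - v) ^ p ≤ 1 * (u - v) ^ p :=
            mul_le_mul_of_nonneg_right h2le1 (Real.rpow_nonneg hduv _)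
        _ ≤ -((-u) ^ p) - -((-v) ^ p) := by linarith
    · -- v < 0 < u
      rw [aux_phi hp (le_of_lt hu), aux_phi_neg hp (le_of_lt hv)]
      have := real_rpow_two_mul hp (le_of_lt hu) (by linarith : (0:ℝ) ≤ -v)
      have he : u + -v = u - v := by ring
      rw [he] at this
      linarith

private lemma aux_hasDerivAt_abs_rpow {p : ℝ} (hp : 1 ≤ p) (x : ℝ) :
    HasDerivAt (fun t : ℝ => |t| ^ (p + 1)) ((p + 1) * (|x| ^ (p - 1) * x)) x := by
  have h1 : HasDerivAt (fun t : ℝ => t ^ (2:ℕ)) (2 * x) x := by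
    simpa using hasDerivAt_pow 2 x
  have h3 : HasDerivAt (fun t : ℝ => (t ^ (2:ℕ) : ℝ) ^ ((p + 1) / 2))
      ((2 * x) * ((p + 1) / 2) * (x ^ (2:ℕ) : ℝ) ^ ((p + 1) / 2 - 1)) x :=
    h1.rpow_const (Or.inr (by linarith))
  have habs : ∀ t : ℝ, (t ^ (2:ℕ) : ℝ) ^ ((p + 1) / 2) = |t| ^ (p + 1) := by
    intro t
    rw [← sq_abs, ← Real.rpow_natCast |t| 2, ← Real.rpow_mul (abs_nonneg t)]
    congr 1
    ring
  have habs' : (x ^ (2:ℕ) : ℝ) ^ ((p + 1) / 2 - 1) = |x| ^ (p - 1) := by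
    rw [← sq_abs, ← Real.rpow_natCast |x| 2, ← Real.rpow_mul (abs_nonneg x)]
    congr 1
    ring
  have heq : (fun t : ℝ => (t ^ (2:ℕ) : ℝ) ^ ((p + 1) / 2)) = fun t : ℝ => |t| ^ (p + 1) := by
    funext t; exact habs t
  rw [heq, habs'] at h3
  convert h3 using 1
  ring

private lemma key1d {p : ℝ} (hp : 1 ≤ p) (a b : ℝ) :
    |b| ^ (p + 1) + (p + 1) * (|b| ^ (p - 1) * b) * (a - b)
      + 2 ^ (1 - p) * |a - b| ^ (p + 1) ≤ |a| ^ (p + 1) := by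
  set c : ℝ := 2 ^ (1 - p) with hc
  have hc0 : 0 ≤ c := le_of_lt (Real.rpow_pos_of_pos two_pos _)
  set G : ℝ → ℝ := fun t => |t| ^ (p + 1) - (p + 1) * (|b| ^ (p - 1) * b) * (t - b)
      - c * |t - b| ^ (p + 1) with hG
  have hGb : G b = |b| ^ (p + 1) := by
    simp [hG, Real.zero_rpow (by linarith : p + 1 ≠ 0)]
  have hderiv : ∀ t : ℝ, HasDerivAt G
      ((p + 1) * (|t| ^ (p - 1) * t) - (p + 1) * (|b| ^ (p - 1) * b)
        - c * ((p + 1) * (|t - b| ^ (p - 1) * (t - b)))) t := by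
    intro t
    have h1 := aux_hasDerivAt_abs_rpow hp t
    have hsub : HasDerivAt (fun t : ℝ => t - b) 1 t := by
      simpa using (hasDerivAt_id t).sub_const b
    have h2 : HasDerivAt (fun t : ℝ => |t - b| ^ (p + 1))
        ((p + 1) * (|t - b| ^ (p - 1) * (t - b))) t := by
      have := (aux_hasDerivAt_abs_rpow hp (t - b)).comp t hsub
      rw [mul_one] at this
      exact this
    have h3 : HasDerivAt (fun t : ℝ => (p + 1) * (|b| ^ (p - 1) * b) * (t - b))
        ((p + 1) * (|b| ^ (p - 1) * b)) t := by
      simpa using (hsub.const_mul ((p + 1) * (|b| ^ (p - 1) * b)))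
    exact (h1.sub h3).sub (h2.const_mul c)
  have hdiff : Differentiable ℝ G := fun t => (hderiv t).differentiableAt
  have hGle : G b ≤ G a := by
    rcases le_total b a with hba | hba
    · -- monotone on [b, a]
      have hmono : MonotoneOn G (Set.Icc b a) := by
        apply monotoneOn_of_deriv_nonneg (convex_Icc b a) hdiff.continuous.continuousOn
          hdiff.differentiableOn
        intro t ht
        rw [interior_Icc] at ht
        rw [(hderiv t).deriv]
        have htb : b ≤ t := le_of_lt ht.1
        have hm := mono_phi hp htb
        have hphi : |t - b| ^ (p - 1) * (t - b) = (t - b) ^ p :=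
          aux_phi hp (by linarith)
        rw [hphi]
        nlinarith [hm, hp]
      exact hmono (Set.left_mem_Icc.2 hba) (Set.right_mem_Icc.2 hba) hba
    · -- antitone on [a, b]
      have hanti : AntitoneOn G (Set.Icc a b) := by
        apply antitoneOn_of_deriv_nonpos (convex_Icc a b) hdiff.continuous.continuousOn
          hdiff.differentiableOn
        intro t ht
        rw [interior_Icc] at ht
        rw [(hderiv t).deriv]
        have htb : t ≤ b := le_of_lt ht.2
        have hm := mono_phi hp htb
        have hphi : |t - b| ^ (p - 1) * (t - b) = -((b - t) ^ p) := by
          rw [abs_sub_comm]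
          have h2 := aux_phi hp (by linarith : (0:ℝ) ≤ b - t)
          linear_combination -h2
        rw [hphi]
        nlinarith [hm, hp]
      exact hanti (Set.left_mem_Icc.2 hba) (Set.right_mem_Icc.2 hba) hba
  rw [hGb] at hGle
  simp only [hG] at hGle
  linarith

theorem stmt2 (n : ℕ) (p : ℝ) (hp : 1 ≤ p) (x y : Fin n → ℝ) :
    (1 / (p + 1)) * ∑ i, |x i| ^ (p + 1) ≥
      (1 / (p + 1)) * ∑ i, |y i| ^ (p + 1)
        + ∑ i, (|y i| ^ (p - 1) * y i) * (x i - y i)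
        + (1 / 2 ^ (p - 1)) * ((1 / (p + 1)) * ∑ i, |x i - y i| ^ (p + 1)) := by
  have hp1 : (0:ℝ) < p + 1 := by linarith
  have hcc : (1:ℝ) / 2 ^ (p - 1) = 2 ^ (1 - p) := by
    rw [one_div, ← Real.rpow_neg (by norm_num : (0:ℝ) ≤ 2)]
    ring_nf
  rw [ge_iff_le, hcc]
  have key : ∀ i : Fin n,
      (1 / (p + 1)) * |y i| ^ (p + 1) + (|y i| ^ (p - 1) * y i) * (x i - y i)
        + 2 ^ (1 - p) * ((1 / (p + 1)) * |x i - y i| ^ (p + 1))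
      ≤ (1 / (p + 1)) * |x i| ^ (p + 1) := by
    intro i
    have h := key1d hp (x i) (y i)
    have h2 := mul_le_mul_of_nonneg_left h (le_of_lt (one_div_pos.2 hp1))
    calc (1 / (p + 1)) * |y i| ^ (p + 1) + (|y i| ^ (p - 1) * y i) * (x i - y i)
          + 2 ^ (1 - p) * ((1 / (p + 1)) * |x i - y i| ^ (p + 1))
        = (1 / (p + 1)) * (|y i| ^ (p + 1)
            + (p + 1) * (|y i| ^ (p - 1) * y i) * (x i - y i)
            + 2 ^ (1 - p) * |x i - y i| ^ (p + 1)) := by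
          field_simp
      _ ≤ (1 / (p + 1)) * |x i| ^ (p + 1) := h2
  calc (1 / (p + 1)) * ∑ i, |y i| ^ (p + 1)
        + ∑ i, (|y i| ^ (p - 1) * y i) * (x i - y i)
        + 2 ^ (1 - p) * ((1 / (p + 1)) * ∑ i, |x i - y i| ^ (p + 1))
      = ∑ i, ((1 / (p + 1)) * |y i| ^ (p + 1) + (|y i| ^ (p - 1) * y i) * (x i - y i)
          + 2 ^ (1 - p) * ((1 / (p + 1)) * |x i - y i| ^ (p + 1))) := by
        simp [Finset.mul_sum, Finset.sum_add_distrib]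
    _ ≤ ∑ i, (1 / (p + 1)) * |x i| ^ (p + 1) := Finset.sum_le_sum fun i _ => key i
    _ = (1 / (p + 1)) * ∑ i, |x i| ^ (p + 1) := (Finset.mul_sum _ _ _).symm
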